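/- For any real numbers x, ν, ν' with ν, ν' ≠ 0, and any rational r/s in lowest terms not an integer multiple of 1/2, the average over k from 0 to s-1 of the squared Hilbert–Schmidt norm of D(ν) · R_{x+kr/s} · D(ν') equals (1/2)(ν² + ν⁻²)(ν'² + ν'⁻²), where D(ν) = diag(ν, ν⁻¹) and R_θ is the rotation matrix by angle 2πθ. -/

import Mathlib

noncomputable def Rot (θ : ℝ) : Matrix (Fin 2) (Fin 2) ℝ :=
  !![Real.cos (2 * Real.pi * θ), -Real.sin (2 * Real.pi * θ);
     Real.sin (2 * Real.pi * θ),  Real.cos (2 * Real.pi * θ)]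

noncomputable def Dmat (ν : ℝ) : Matrix (Fin 2) (Fin 2) ℝ := !![ν, 0; 0, ν⁻¹]

/-- Squared Hilbert–Schmidt norm. -/
def hsNormSq (A : Matrix (Fin 2) (Fin 2) ℝ) : ℝ :=
  (A 0 0) ^ 2 + (A 0 1) ^ 2 + (A 1 0) ^ 2 + (A 1 1) ^ 2

open Complex in
lemma sum_exp_aux (r : ℤ) (s : ℕ) (hs : 0 < s) (hhalf : ¬ ((s : ℤ) ∣ 2 * r)) :
    ∑ k ∈ Finset.range s, Complex.exp (2 * Real.pi * I * (2 * r) / s * k) = 0 := by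
  set ζ : ℂ := Complex.exp (2 * Real.pi * I * (2 * r) / s) with hζ
  have hs0 : (s : ℂ) ≠ 0 := Nat.cast_ne_zero.mpr hs.ne'
  have hne : ζ ≠ 1 := by
    intro h
    rw [hζ, Complex.exp_eq_one_iff] at h
    obtain ⟨n, hn⟩ := h
    apply hhalf
    have hpi : (2 : ℂ) * Real.pi * I ≠ 0 := by
      simp [Real.pi_ne_zero, Complex.I_ne_zero]
    field_simp at hn
    have h2 : (2 * r : ℂ) = n * s := by
      refine mul_left_cancel₀ hpi ?_
      linear_combination (2 * (Real.pi : ℂ) * I) * hn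
    have h3 : (2 * r : ℤ) = n * s := by exact_mod_cast h2
    exact ⟨n, by linarith [h3]⟩
  have hpow : ∀ k : ℕ, Complex.exp (2 * Real.pi * I * (2 * r) / s * k) = ζ ^ k := by
    intro k
    rw [hζ, ← Complex.exp_nat_mul]
    ring_nf
  simp only [hpow]
  rw [geom_sum_eq hne]
  have : ζ ^ s = 1 := by
    rw [hζ, ← Complex.exp_nat_mul]
    have : (s : ℂ) * (2 * Real.pi * I * (2 * r) / s) = (2 * r : ℤ) * (2 * Real.pi * I) := by
      field_simp; push_cast; ring
    rw [this, Complex.exp_int_mul_two_pi_mul_I]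
  simp [this]

open Complex in
lemma sum_cos_aux (x : ℝ) (r : ℤ) (s : ℕ) (hs : 0 < s)
    (hexp : ∑ k ∈ Finset.range s, Complex.exp (2 * Real.pi * I * (2 * r) / s * k) = 0) :
    ∑ k ∈ Finset.range s,
      Real.cos (2 * (2 * Real.pi * (x + (k : ℝ) * (r : ℝ) / (s : ℝ)))) = 0 := by
  have hs0 : (s : ℂ) ≠ 0 := Nat.cast_ne_zero.mpr hs.ne'
  have key : ∀ k : ℕ,
      Real.cos (2 * (2 * Real.pi * (x + (k : ℝ) * (r : ℝ) / (s : ℝ))))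
        = (Complex.exp (((4 * Real.pi * x : ℝ)) * I)
            * Complex.exp (2 * Real.pi * I * (2 * r) / s * k)).re := by
    intro k
    rw [← Complex.exp_add]
    have harg : ((4 * Real.pi * x : ℝ) : ℂ) * I + 2 * Real.pi * I * (2 * r) / s * k
        = ((2 * (2 * Real.pi * (x + (k : ℝ) * (r : ℝ) / (s : ℝ))) : ℝ) : ℂ) * I := by
      push_cast
      field_simp
      ring
    rw [harg, Complex.exp_ofReal_mul_I_re]
  simp only [key]
  rw [← Complex.re_sum, ← Finset.mul_sum, hexp, mul_zero, Complex.zero_re]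

lemma entry_eval (ν ν' θ : ℝ) :
    hsNormSq (Dmat ν * Rot θ * Dmat ν')
      = (1/2) * (ν^2 + ν⁻¹^2) * (ν'^2 + ν'⁻¹^2)
        + (1/2) * (ν^2*ν'^2 - ν^2*ν'⁻¹^2 - ν⁻¹^2*ν'^2 + ν⁻¹^2*ν'⁻¹^2)
          * Real.cos (2 * (2 * Real.pi * θ)) := by
  have hc : Real.cos (2 * Real.pi * θ) ^ 2 = 1/2 + Real.cos (2 * (2 * Real.pi * θ)) / 2 :=
    Real.cos_sq _
  have hsn : Real.sin (2 * Real.pi * θ) ^ 2 = 1 - Real.cos (2 * Real.pi * θ) ^ 2 :=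
    Real.sin_sq _
  simp [hsNormSq, Dmat, Rot, Matrix.mul_fin_two]
  linear_combination (ν^2*ν'^2 + ν⁻¹^2*ν'⁻¹^2 - ν^2*ν'⁻¹^2 - ν⁻¹^2*ν'^2) * hc
    + (ν^2*ν'⁻¹^2 + ν⁻¹^2*ν'^2) * hsn

theorem stmt2 (x ν ν' : ℝ) (hν : ν ≠ 0) (hν' : ν' ≠ 0) (r : ℤ) (s : ℕ) (hs : 0 < s)
    (hcop : Int.gcd r (s : ℤ) = 1) (hhalf : ¬ ((s : ℤ) ∣ 2 * r)) :
    (1 / (s : ℝ)) * ∑ k ∈ Finset.range s,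
        hsNormSq (Dmat ν * Rot (x + (k : ℝ) * (r : ℝ) / (s : ℝ)) * Dmat ν')
      = (1 / 2) * (ν ^ 2 + ν⁻¹ ^ 2) * (ν' ^ 2 + ν'⁻¹ ^ 2) := by
  have hcos := sum_cos_aux x r s hs (sum_exp_aux r s hs hhalf)
  have hs0 : (s : ℝ) ≠ 0 := Nat.cast_ne_zero.mpr hs.ne'
  simp only [entry_eval]
  rw [Finset.sum_add_distrib, Finset.sum_const, Finset.card_range, ← Finset.mul_sum,
    hcos, mul_zero, add_zero, nsmul_eq_mul]
  field_simp
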